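/- As formal power series in q and t: (−q²;q²)_∞ / (tq;q²)_∞ = Σ_{π ∈ DE} t^{n_o(π)} q^{|π|}, where DE is the set of partitions with distinct even parts (even parts do not repeat) and n_o(π) is the number of odd parts of π. -/

import Mathlib

open Finset

/-- The product (coefficient-wise convergence) topology on formal power series. -/
noncomputable instance : TopologicalSpace (MvPowerSeries (Fin 2) ℚ) :=
  inferInstanceAs (TopologicalSpace ((Fin 2 →₀ ℕ) → ℚ))

/-- The variable `q`. -/
noncomputable def q : MvPowerSeries (Fin 2) ℚ := MvPowerSeries.X 0

/-- The variable `t`. -/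
noncomputable def t : MvPowerSeries (Fin 2) ℚ := MvPowerSeries.X 1

/-- The finite q-Pochhammer symbol `(a; b)_n = ∏_{k=0}^{n-1} (1 - a b^k)`. -/
noncomputable def poch (a b : MvPowerSeries (Fin 2) ℚ) (n : ℕ) : MvPowerSeries (Fin 2) ℚ :=
  ∏ k ∈ range n, (1 - a * b ^ k)

/-- The infinite q-Pochhammer symbol `(a; b)_∞ = ∏_{k≥0} (1 - a b^k)`. -/
noncomputable def pochInf (a b : MvPowerSeries (Fin 2) ℚ) : MvPowerSeries (Fin 2) ℚ :=
  ∏' k : ℕ, (1 - a * b ^ k)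

/-- Partitions of `N` in which even parts do not repeat. -/
noncomputable def DE (N : ℕ) : Finset (Nat.Partition N) :=
  Finset.univ.filter fun p => ∀ i ∈ p.parts, Even i → p.parts.count i ≤ 1

/-- The number of odd parts of a partition. -/
noncomputable def oddCount {N : ℕ} (p : Nat.Partition N) : ℕ :=
  (p.parts.filter fun i => Odd i).card

/-! ### Auxiliary development -/

noncomputable instance : T2Space (MvPowerSeries (Fin 2) ℚ) :=
  inferInstanceAs (T2Space ((Fin 2 →₀ ℕ) → ℚ))

namespace DEaux

abbrev PS := MvPowerSeries (Fin 2) ℚ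

/-- The exponent of the monomial `t^a q^N`. -/
noncomputable def mono (N a : ℕ) : Fin 2 →₀ ℕ := Finsupp.single 0 N + Finsupp.single 1 a

@[simp] lemma mono_apply_zero (N a : ℕ) : mono N a 0 = N := by
  rw [mono, Finsupp.add_apply, Finsupp.single_eq_same,
    Finsupp.single_eq_of_ne' (by decide : (1 : Fin 2) ≠ 0), add_zero]

@[simp] lemma mono_apply_one (N a : ℕ) : mono N a 1 = a := by
  rw [mono, Finsupp.add_apply, Finsupp.single_eq_same,
    Finsupp.single_eq_of_ne' (by decide : (0 : Fin 2) ≠ 1), zero_add]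

lemma eq_mono (d : Fin 2 →₀ ℕ) : d = mono (d 0) (d 1) := by
  refine Finsupp.ext fun i => ?_
  fin_cases i
  · rw [show (⟨0, by omega⟩ : Fin 2) = 0 from rfl, mono_apply_zero]
  · rw [show (⟨1, by omega⟩ : Fin 2) = 1 from rfl, mono_apply_one]

lemma mono_eq_iff {d : Fin 2 →₀ ℕ} {N a : ℕ} : d = mono N a ↔ d 0 = N ∧ d 1 = a := by
  constructor
  · rintro rfl; simp
  · rintro ⟨h1, h2⟩; subst h1; subst h2; exact eq_mono d

lemma mono_le_iff {d : Fin 2 →₀ ℕ} {N a : ℕ} : mono N a ≤ d ↔ N ≤ d 0 ∧ a ≤ d 1 := by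
  rw [Finsupp.le_def]
  constructor
  · intro h
    exact ⟨by simpa using h 0, by simpa using h 1⟩
  · rintro ⟨h1, h2⟩ i
    fin_cases i
    · rw [show (⟨0, by omega⟩ : Fin 2) = 0 from rfl, mono_apply_zero]; exact h1
    · rw [show (⟨1, by omega⟩ : Fin 2) = 1 from rfl, mono_apply_one]; exact h2

@[simp] lemma mono_zero : mono 0 0 = 0 := by
  rw [mono]; simp

lemma tq_pow (N a : ℕ) : (t ^ a * q ^ N : PS) = MvPowerSeries.monomial (mono N a) 1 := by
  rw [t, q, MvPowerSeries.X_pow_eq, MvPowerSeries.X_pow_eq, MvPowerSeries.monomial_mul_monomial,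
    one_mul, mono, add_comm]

lemma coeff_tq_pow (d : Fin 2 →₀ ℕ) (N a : ℕ) :
    MvPowerSeries.coeff d (t ^ a * q ^ N : PS) = if d 0 = N ∧ d 1 = a then 1 else 0 := by
  rw [tq_pow, MvPowerSeries.coeff_monomial]
  simp only [mono_eq_iff]

/-! ### Congruence modulo `q`-degree `N` -/

def CEq (N : ℕ) (F G : PS) : Prop :=
  ∀ d : Fin 2 →₀ ℕ, d 0 ≤ N → MvPowerSeries.coeff d F = MvPowerSeries.coeff d G

lemma CEq.refl (N : ℕ) (F : PS) : CEq N F F := fun _ _ => rfl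

lemma CEq.mul {N : ℕ} {F F' G G' : PS} (h1 : CEq N F F') (h2 : CEq N G G') :
    CEq N (F * G) (F' * G') := by
  intro d hd
  rw [MvPowerSeries.coeff_mul, MvPowerSeries.coeff_mul]
  refine Finset.sum_congr rfl fun p hp => ?_
  have hadd : p.1 + p.2 = d := Finset.HasAntidiagonal.mem_antidiagonal.mp hp
  have h0 : p.1 0 + p.2 0 = d 0 := by rw [← hadd, Finsupp.add_apply]
  rw [h1 p.1 (by omega), h2 p.2 (by omega)]

lemma CEq.prod_one {N : ℕ} {ι : Type*} {s : Finset ι} {f : ι → PS}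
    (h : ∀ k ∈ s, CEq N (f k) 1) : CEq N (∏ k ∈ s, f k) 1 := by
  classical
  induction s using Finset.cons_induction with
  | empty => intro d hd; rw [Finset.prod_empty]
  | cons a s ha ih =>
    intro d hd
    rw [Finset.prod_cons]
    have h1 := CEq.mul (h a (Finset.mem_cons_self a s))
      (ih fun k hk => h k (Finset.mem_cons_of_mem hk)) d hd
    rw [one_mul] at h1
    exact h1

/-! ### Infinite products -/

section Products

variable (A : PS)

def Small (A : PS) : Prop := ∀ (k : ℕ) (d : Fin 2 →₀ ℕ), d 0 < 2 * k + 1 →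
  MvPowerSeries.coeff d (A * (q ^ 2) ^ k) = 0

variable (hA : Small A)

lemma CEq_one_sub (hA : Small A) {N k : ℕ} (h : N < 2 * k + 1) : CEq N (1 - A * (q ^ 2) ^ k) 1 := by
  intro d hd
  rw [map_sub, hA k d (by omega), sub_zero]

noncomputable def pochLim : PS := fun d => MvPowerSeries.coeff d (poch A (q ^ 2) (d 0 + 1))

lemma hasProd_poch (hA : Small A) : HasProd (fun k => 1 - A * (q ^ 2) ^ k) (pochLim A) := by
  rw [HasProd]
  refine tendsto_pi_nhds.mpr fun d => ?_
  refine Filter.Tendsto.congr' ?_ (tendsto_const_nhds (x := pochLim A d))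
  filter_upwards [Filter.eventually_ge_atTop (Finset.range (d 0 + 1))] with s hs
  show pochLim A d = MvPowerSeries.coeff d (∏ k ∈ s, (1 - A * (q ^ 2) ^ k))
  rw [← Finset.prod_sdiff hs]
  have htail : CEq (d 0) (∏ k ∈ s \ Finset.range (d 0 + 1), (1 - A * (q ^ 2) ^ k)) 1 := by
    refine CEq.prod_one fun k hk => ?_
    have hk2 : ¬ k < d 0 + 1 := by
      have := (Finset.mem_sdiff.mp hk).2
      simpa [Finset.mem_range] using this
    exact CEq_one_sub A hA (by omega)
  have h1 := (CEq.mul htail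
    (CEq.refl (d 0) (∏ k ∈ Finset.range (d 0 + 1), (1 - A * (q ^ 2) ^ k)))) d le_rfl
  rw [h1, one_mul]
  rfl

lemma pochInf_eq (hA : Small A) : pochInf A (q ^ 2) = pochLim A := (hasProd_poch A hA).tprod_eq

lemma coeff_pochInf (hA : Small A) (d : Fin 2 →₀ ℕ) :
    MvPowerSeries.coeff d (pochInf A (q ^ 2)) =
      MvPowerSeries.coeff d (poch A (q ^ 2) (d 0 + 1)) := by
  rw [pochInf_eq A hA]; rfl

lemma CEq_poch_succ (hA : Small A) {N n n' : ℕ} (hn : N + 1 ≤ n) (hnn : n ≤ n') :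
    CEq N (poch A (q ^ 2) n) (poch A (q ^ 2) n') := by
  intro d hd
  unfold poch
  rw [Finset.range_eq_Ico, Finset.range_eq_Ico, ← Finset.prod_Ico_consecutive _ (Nat.zero_le n) hnn]
  have htail : CEq N (∏ k ∈ Finset.Ico n n', (1 - A * (q ^ 2) ^ k)) 1 :=
    CEq.prod_one fun k hk => CEq_one_sub A hA
      (by have := (Finset.mem_Ico.mp hk).1; omega)
  have h1 := (CEq.mul (CEq.refl N (∏ k ∈ Finset.Ico 0 n, (1 - A * (q ^ 2) ^ k))) htail) d hd
  rw [h1, mul_one]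

lemma CEq_pochInf (hA : Small A) (N : ℕ) : CEq N (pochInf A (q ^ 2)) (poch A (q ^ 2) (N + 1)) := by
  intro d hd
  rw [coeff_pochInf A hA d]
  exact CEq_poch_succ A hA le_rfl (by omega) d le_rfl

end Products

lemma coeff_tq_mul : Small (t * q) := by
  intro k d hd
  have h : ((t * q) * (q ^ 2) ^ k : PS) = t ^ 1 * q ^ (2 * k + 1) := by ring
  rw [h, coeff_tq_pow, if_neg]
  rintro ⟨h1, -⟩
  omega

lemma coeff_nq_mul : Small (-(q ^ 2)) := by
  intro k d hd
  have h : ((-(q ^ 2)) * (q ^ 2) ^ k : PS) = -(t ^ 0 * q ^ (2 * k + 2)) := by ring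
  rw [h, map_neg, coeff_tq_pow, if_neg, neg_zero]
  rintro ⟨h1, -⟩
  omega

/-! ### The sum side -/

noncomputable def fN (N : ℕ) : PS := ∑ p ∈ DE N, t ^ oddCount p * q ^ N

lemma coeff_fN (d : Fin 2 →₀ ℕ) (N : ℕ) :
    MvPowerSeries.coeff d (fN N) =
      if d 0 = N then (((DE N).filter fun p => oddCount p = d 1).card : ℚ) else 0 := by
  rw [fN, map_sum]
  simp only [coeff_tq_pow]
  split_ifs with h
  · rw [Finset.card_filter, Nat.cast_sum]
    refine Finset.sum_congr rfl fun p _ => ?_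
    by_cases h2 : oddCount p = d 1
    · rw [if_pos ⟨h, h2.symm⟩, if_pos h2, Nat.cast_one]
    · rw [if_neg (fun hc => h2 hc.2.symm), if_neg h2, Nat.cast_zero]
  · exact Finset.sum_eq_zero fun p _ => if_neg (fun hc => h hc.1)

noncomputable def Ssum : PS := fun d => MvPowerSeries.coeff d (fN (d 0))

lemma hasSum_fN : HasSum fN Ssum := by
  rw [HasSum]
  refine tendsto_pi_nhds.mpr fun d => ?_
  refine Filter.Tendsto.congr' ?_ (tendsto_const_nhds (x := Ssum d))
  filter_upwards [Filter.eventually_ge_atTop ({d 0} : Finset ℕ)] with s hs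
  have hmem : d 0 ∈ s := hs (Finset.mem_singleton_self _)
  show Ssum d = MvPowerSeries.coeff d (∑ N ∈ s, fN N)
  rw [map_sum, Finset.sum_eq_single_of_mem (d 0) hmem
    (fun b _ hb => by rw [coeff_fN, if_neg (fun hc => hb hc.symm)])]
  rfl

lemma tsum_fN : ∑' N : ℕ, fN N = Ssum := hasSum_fN.tsum_eq

/-! ### Counting partitions -/

noncomputable def cnt (m N a : ℕ) : ℕ :=
  ((DE N).filter fun p => oddCount p = a ∧ ∀ i ∈ p.parts, i ≤ m).card

lemma cnt_def (m N a : ℕ) :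
    cnt m N a = ((DE N).filter fun p => oddCount p = a ∧ ∀ i ∈ p.parts, i ≤ m).card := rfl

lemma mem_DE {N : ℕ} {p : Nat.Partition N} :
    p ∈ DE N ↔ ∀ i ∈ p.parts, Even i → p.parts.count i ≤ 1 := by
  simp [DE]

lemma parts_decomp (s : Multiset ℕ) (m : ℕ) :
    s.filter (fun i => ¬ i = m) + Multiset.replicate (s.count m) m = s := by
  have h := Multiset.filter_add_not (fun i => i = m) s
  rw [Multiset.filter_eq'] at h
  conv_rhs => rw [← h]
  exact add_comm _ _

lemma sum_filter_ne (s : Multiset ℕ) (m : ℕ) :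
    (s.filter (fun i => ¬ i = m)).sum + m * s.count m = s.sum := by
  have h := congrArg Multiset.sum (parts_decomp s m)
  rwa [Multiset.sum_add, Multiset.sum_replicate, smul_eq_mul, mul_comm (s.count m) m] at h

lemma oddFilter_card_add (l : Multiset ℕ) (j m : ℕ) :
    ((l + Multiset.replicate j m).filter (fun i => Odd i)).card
      = (l.filter (fun i => Odd i)).card + if Odd m then j else 0 := by
  rw [Multiset.filter_add, Multiset.card_add]
  congr 1
  split_ifs with hm
  · rw [Multiset.filter_eq_self.mpr fun a ha => by
      rw [Multiset.eq_of_mem_replicate ha]; exact hm, Multiset.card_replicate]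
  · rw [Multiset.filter_eq_nil.mpr fun a ha => by
      rw [Multiset.eq_of_mem_replicate ha]; exact hm, Multiset.card_zero]

lemma count_mul_le {N : ℕ} (p : Nat.Partition N) (m : ℕ) : m * p.parts.count m ≤ N := by
  have h := sum_filter_ne p.parts m
  rw [p.parts_sum] at h
  omega

lemma count_le_oddCount {N : ℕ} (p : Nat.Partition N) {m : ℕ} (hm : Odd m) :
    p.parts.count m ≤ oddCount p := by
  rw [oddCount]
  have h1 : Multiset.replicate (p.parts.count m) m ≤ p.parts :=
    Multiset.le_count_iff_replicate_le.mp le_rfl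
  have h2 : Multiset.replicate (p.parts.count m) m ≤ p.parts.filter (fun i => Odd i) :=
    Multiset.le_filter.mpr ⟨h1, fun a ha => by rw [Multiset.eq_of_mem_replicate ha]; exact hm⟩
  simpa using Multiset.card_le_card h2

lemma card_slice (m j N a a' : ℕ) (hm : 0 < m) (hmj : m * j ≤ N) (hje : Even m → j ≤ 1)
    (ha' : a = a' + if Odd m then j else 0) :
    ((DE N).filter fun p =>
        (oddCount p = a ∧ ∀ i ∈ p.parts, i ≤ m) ∧ p.parts.count m = j).card
      = cnt (m - 1) (N - m * j) a' := by
  rw [cnt_def]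
  refine Finset.card_bij'
    (fun p hp => ⟨p.parts.filter (fun i => ¬ i = m),
      fun {i} hi => p.parts_pos (Multiset.mem_filter.mp hi).1, ?_⟩)
    (fun p hp => ⟨p.parts + Multiset.replicate j m, fun {i} hi => ?_, ?_⟩)
    ?_ ?_ ?_ ?_
  · -- forward sum
    obtain ⟨hDE, ⟨ho, hle⟩, hcount⟩ := Finset.mem_filter.mp hp
    have h := sum_filter_ne p.parts m
    rw [p.parts_sum, hcount] at h
    omega
  · -- backward positivity
    rcases Multiset.mem_add.mp hi with h | h
    · exact p.parts_pos h
    · rw [Multiset.eq_of_mem_replicate h]; exact hm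
  · -- backward sum
    rw [Multiset.sum_add, Multiset.sum_replicate, smul_eq_mul, p.parts_sum, mul_comm j m]
    omega
  · -- forward membership
    intro p hp
    obtain ⟨hDE, ⟨ho, hle⟩, hcount⟩ := Finset.mem_filter.mp hp
    have hd : p.parts = p.parts.filter (fun i => ¬ i = m) + Multiset.replicate j m := by
      rw [← hcount]; exact (parts_decomp p.parts m).symm
    refine Finset.mem_filter.mpr ⟨mem_DE.mpr fun i hi hieven => ?_, ?_, ?_⟩
    · have hmem : i ∈ p.parts := (Multiset.mem_filter.mp hi).1
      exact le_trans (Multiset.count_le_of_le i (Multiset.filter_le _ _))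
        (mem_DE.mp hDE i hmem hieven)
    · -- oddCount
      show ((p.parts.filter (fun i => ¬ i = m)).filter (fun i => Odd i)).card = a'
      have h2 := oddFilter_card_add (p.parts.filter (fun i => ¬ i = m)) j m
      rw [← hd] at h2
      rw [oddCount] at ho
      by_cases hom : Odd m
      · rw [if_pos hom] at h2 ha'; omega
      · rw [if_neg hom] at h2 ha'; omega
    · intro i hi
      obtain ⟨him, hne⟩ := Multiset.mem_filter.mp hi
      have := hle i him
      omega
  · -- backward membership
    intro p hp
    obtain ⟨hDE, ho, hle⟩ := Finset.mem_filter.mp hp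
    have hmnot : m ∉ p.parts := fun hmem => by have := hle m hmem; omega
    refine Finset.mem_filter.mpr ⟨mem_DE.mpr fun i hi hieven => ?_, ⟨?_, ?_⟩, ?_⟩
    · rw [Multiset.count_add, Multiset.count_replicate]
      by_cases him : m = i
      · subst him
        rw [Multiset.count_eq_zero.mpr hmnot, if_pos rfl, zero_add]
        exact hje hieven
      · rw [if_neg him, add_zero]
        rcases Multiset.mem_add.mp hi with h | h
        · exact mem_DE.mp hDE i h hieven
        · exact absurd (Multiset.eq_of_mem_replicate h).symm him
    · -- oddCount = a
      show ((p.parts + Multiset.replicate j m).filter (fun i => Odd i)).card = a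
      rw [oddFilter_card_add]
      rw [oddCount] at ho
      omega
    · intro i hi
      rcases Multiset.mem_add.mp hi with h | h
      · have := hle i h; omega
      · rw [Multiset.eq_of_mem_replicate h]
    · rw [Multiset.count_add, Multiset.count_replicate, if_pos rfl,
        Multiset.count_eq_zero.mpr hmnot, zero_add]
  · -- left inverse
    intro p hp
    obtain ⟨hDE, ⟨ho, hle⟩, hcount⟩ := Finset.mem_filter.mp hp
    apply Nat.Partition.ext
    show p.parts.filter (fun i => ¬ i = m) + Multiset.replicate j m = p.parts
    rw [← hcount]
    exact parts_decomp p.parts m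
  · -- right inverse
    intro p hp
    obtain ⟨hDE, ho, hle⟩ := Finset.mem_filter.mp hp
    apply Nat.Partition.ext
    show (p.parts + Multiset.replicate j m).filter (fun i => ¬ i = m) = p.parts
    rw [Multiset.filter_add,
      Multiset.filter_eq_self.mpr (fun i hi => by have := hle i hi; omega),
      Multiset.filter_eq_nil.mpr (fun i hi => not_not_intro (Multiset.eq_of_mem_replicate hi)),
      add_zero]

lemma slice_odd (m j N a : ℕ) (hm : Odd m) :
    ((DE N).filter fun p =>
        (oddCount p = a ∧ ∀ i ∈ p.parts, i ≤ m) ∧ p.parts.count m = j).card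
      = if m * j ≤ N ∧ j ≤ a then cnt (m - 1) (N - m * j) (a - j) else 0 := by
  have hm0 : 0 < m := hm.pos
  split_ifs with h
  · exact card_slice m j N a (a - j) hm0 h.1
      (fun he => absurd hm (by simpa using he))
      (by rw [if_pos hm]; omega)
  · refine Finset.card_eq_zero.mpr (Finset.filter_eq_empty_iff.mpr fun p hp => ?_)
    rintro ⟨⟨ho, hb⟩, hc⟩
    refine h ⟨?_, ?_⟩
    · have := count_mul_le p m; rw [hc] at this; exact this
    · have := count_le_oddCount p hm; rw [hc, ho] at this; exact this

lemma cnt_odd (m M N a : ℕ) (hm : Odd m) (hNM : N < M) :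
    cnt m N a = ∑ j ∈ Finset.range M,
      if m * j ≤ N ∧ j ≤ a then cnt (m - 1) (N - m * j) (a - j) else 0 := by
  have hm0 : 0 < m := hm.pos
  rw [cnt_def, Finset.card_eq_sum_card_fiberwise
    (f := fun p => p.parts.count m) (t := Finset.range M)
    (fun p hp => by
      rw [Finset.mem_coe, Finset.mem_range]
      show Multiset.count m p.parts < M
      have h1 := count_mul_le p m
      have h2 : p.parts.count m ≤ m * p.parts.count m := Nat.le_mul_of_pos_left _ hm0
      omega)]
  refine Finset.sum_congr rfl fun j _ => ?_
  rw [Finset.filter_filter]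
  exact slice_odd m j N a hm

lemma cnt_even (m N a : ℕ) (hm : Even m) (hm0 : 0 < m) :
    cnt m N a = cnt (m - 1) N a + if m ≤ N then cnt (m - 1) (N - m) a else 0 := by
  have hnotodd : ¬ Odd m := by simpa using hm
  rw [cnt_def, ← Finset.card_filter_add_card_filter_not
    (p := fun p => p.parts.count m = 0), Finset.filter_filter, Finset.filter_filter]
  congr 1
  · rw [cnt_def]
    congr 1
    refine Finset.filter_congr fun p hp => ?_
    constructor
    · rintro ⟨⟨ho, hle⟩, hc⟩
      refine ⟨ho, fun i hi => ?_⟩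
      have h1 := hle i hi
      have h2 : i ≠ m := fun he => by
        rw [← he] at hc
        exact absurd (Multiset.count_eq_zero.mp hc) (not_not_intro hi)
      omega
    · rintro ⟨ho, hle⟩
      refine ⟨⟨ho, fun i hi => le_trans (hle i hi) (by omega)⟩, ?_⟩
      rw [Multiset.count_eq_zero]
      intro hmem
      have := hle m hmem
      omega
  · have hcongr : ∀ p ∈ DE N,
        (((oddCount p = a ∧ ∀ i ∈ p.parts, i ≤ m) ∧ ¬ p.parts.count m = 0) ↔
          ((oddCount p = a ∧ ∀ i ∈ p.parts, i ≤ m) ∧ p.parts.count m = 1)) := by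
      intro p hpDE
      constructor
      · rintro ⟨hx, hc⟩
        refine ⟨hx, ?_⟩
        have hmem : m ∈ p.parts := by
          by_contra hmem
          exact hc (Multiset.count_eq_zero.mpr hmem)
        have := mem_DE.mp hpDE m hmem hm
        omega
      · rintro ⟨hx, hc⟩
        exact ⟨hx, by omega⟩
    rw [Finset.filter_congr hcongr]
    split_ifs with hN
    · have h := card_slice m 1 N a a hm0 (by omega) (fun _ => le_rfl)
        (by rw [if_neg hnotodd]; omega)
      rw [mul_one] at h
      exact h
    · refine Finset.card_eq_zero.mpr (Finset.filter_eq_empty_iff.mpr fun p hp => ?_)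
      rintro ⟨⟨ho, hb⟩, hc⟩
      have hmem : m ∈ p.parts := Multiset.count_pos.mp (by omega)
      have h1 := Multiset.le_sum_of_mem hmem
      rw [p.parts_sum] at h1
      omega

lemma cnt_zero (N a : ℕ) : cnt 0 N a = if N = 0 ∧ a = 0 then 1 else 0 := by
  have hparts : ∀ p : Nat.Partition N, (∀ i ∈ p.parts, i ≤ 0) → p.parts = 0 := fun p h =>
    Multiset.eq_zero_of_forall_notMem fun i hi => by
      have h1 := p.parts_pos hi
      have h2 := h i hi
      omega
  rw [cnt_def]
  split_ifs with h
  · obtain ⟨hN, ha⟩ := h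
    subst hN; subst ha
    rw [Finset.card_eq_one]
    have hall : ∀ p : Nat.Partition 0, p.parts = 0 := fun p =>
      Multiset.eq_zero_of_forall_notMem fun i hi => by
        have h1 := p.parts_pos hi
        have h2 := Multiset.le_sum_of_mem hi
        rw [p.parts_sum] at h2
        omega
    refine ⟨⟨0, fun {i} hi => absurd hi (Multiset.notMem_zero _), rfl⟩, ?_⟩
    refine Finset.eq_singleton_iff_unique_mem.mpr ⟨?_, fun p _ => ?_⟩
    · refine Finset.mem_filter.mpr ⟨mem_DE.mpr fun i hi _ => ?_, ?_, fun i hi => ?_⟩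
      · exact absurd hi (Multiset.notMem_zero _)
      · rw [oddCount]; simp
      · exact absurd hi (Multiset.notMem_zero _)
    · apply Nat.Partition.ext
      rw [hall p]
  · refine Finset.card_eq_zero.mpr (Finset.filter_eq_empty_iff.mpr fun p hp => ?_)
    rintro ⟨ho, hb⟩
    have h0 := hparts p hb
    refine h ⟨?_, ?_⟩
    · rw [← p.parts_sum, h0]; rfl
    · rw [← ho, oddCount, h0]; rfl

lemma cnt_full (m N a : ℕ) (h : N ≤ m) :
    cnt m N a = ((DE N).filter fun p => oddCount p = a).card := by
  rw [cnt_def]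
  congr 1
  refine Finset.filter_congr fun p hp => ?_
  refine and_iff_left fun i hi => ?_
  have h1 : i ≤ p.parts.sum := Multiset.le_sum_of_mem hi
  rw [p.parts_sum] at h1
  omega

/-! ### Generating-function steps -/

lemma step_odd (m M : ℕ) (hm : Odd m) (F : PS)
    (H : ∀ d : Fin 2 →₀ ℕ, d 0 < M →
      MvPowerSeries.coeff d F = cnt (m - 1) (d 0) (d 1)) :
    ∀ d : Fin 2 →₀ ℕ, d 0 < M →
      MvPowerSeries.coeff d (F * ∑ j ∈ Finset.range M, (t * q ^ m) ^ j)
        = cnt m (d 0) (d 1) := by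
  intro d hd
  have hterm : ∀ j : ℕ, MvPowerSeries.coeff d (F * (t * q ^ m) ^ j)
      = if m * j ≤ d 0 ∧ j ≤ d 1 then (cnt (m - 1) (d 0 - m * j) (d 1 - j) : ℚ) else 0 := by
    intro j
    have hx : ((t * q ^ m) ^ j : PS) = MvPowerSeries.monomial (mono (m * j) j) 1 := by
      rw [← tq_pow]; ring
    rw [hx, MvPowerSeries.coeff_mul_monomial, mul_one]
    by_cases hc : m * j ≤ d 0 ∧ j ≤ d 1
    · have h0 : (d - mono (m * j) j) 0 = d 0 - m * j := by
        rw [Finsupp.tsub_apply, mono_apply_zero]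
      have h1 : (d - mono (m * j) j) 1 = d 1 - j := by
        rw [Finsupp.tsub_apply, mono_apply_one]
      rw [if_pos (mono_le_iff.mpr hc), if_pos hc, H _ (by rw [h0]; omega), h0, h1]
    · rw [if_neg (fun hle => hc (mono_le_iff.mp hle)), if_neg hc]
  rw [Finset.mul_sum, map_sum, Finset.sum_congr rfl fun j _ => hterm j,
    cnt_odd m M (d 0) (d 1) hm hd]
  push_cast
  rfl

lemma step_even (m M : ℕ) (hm : Even m) (hm0 : 0 < m) (F : PS)
    (H : ∀ d : Fin 2 →₀ ℕ, d 0 < M →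
      MvPowerSeries.coeff d F = cnt (m - 1) (d 0) (d 1)) :
    ∀ d : Fin 2 →₀ ℕ, d 0 < M →
      MvPowerSeries.coeff d (F * (1 + q ^ m)) = (cnt m (d 0) (d 1) : ℚ) := by
  intro d hd
  have hq : (q ^ m : PS) = MvPowerSeries.monomial (mono m 0) 1 := by
    rw [← tq_pow]; ring
  rw [mul_add, mul_one, map_add, H d hd, hq, MvPowerSeries.coeff_mul_monomial, mul_one,
    cnt_even m (d 0) (d 1) hm hm0]
  by_cases hc : m ≤ d 0
  · have h0 : (d - mono m 0) 0 = d 0 - m := by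
      rw [Finsupp.tsub_apply, mono_apply_zero]
    have h1 : (d - mono m 0) 1 = d 1 := by
      rw [Finsupp.tsub_apply, mono_apply_one, Nat.sub_zero]
    rw [if_pos (mono_le_iff.mpr ⟨hc, Nat.zero_le _⟩), H _ (by rw [h0]; omega), h0, h1,
      if_pos hc]
    push_cast
    ring
  · rw [if_neg (fun hle => hc (mono_le_iff.mp hle).1), if_neg hc]
    push_cast
    ring

lemma coeff_bigProd (M n : ℕ) :
    ∀ d : Fin 2 →₀ ℕ, d 0 < M →
      MvPowerSeries.coeff d ((∏ k ∈ Finset.range n, (1 + q ^ (2 * k + 2))) *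
          ∏ k ∈ Finset.range n, (∑ j ∈ Finset.range M, (t * q ^ (2 * k + 1)) ^ j))
        = cnt (2 * n) (d 0) (d 1) := by
  induction n with
  | zero =>
    intro d hd
    simp only [Finset.range_zero, Finset.prod_empty, mul_one]
    rw [MvPowerSeries.coeff_one, cnt_zero]
    by_cases h : d = 0
    · have h2 : d 0 = 0 ∧ d 1 = 0 := by rw [h]; exact ⟨rfl, rfl⟩
      rw [if_pos h, if_pos h2, Nat.cast_one]
    · have h2 : ¬ (d 0 = 0 ∧ d 1 = 0) := fun ⟨h0, h1⟩ => h (by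
        rw [eq_mono d, h0, h1, mono_zero])
      rw [if_neg h, if_neg h2, Nat.cast_zero]
  | succ n ih =>
    intro d hd
    have hsplit : (∏ k ∈ Finset.range (n + 1), (1 + q ^ (2 * k + 2))) *
        ∏ k ∈ Finset.range (n + 1), (∑ j ∈ Finset.range M, (t * q ^ (2 * k + 1)) ^ j)
        = (((∏ k ∈ Finset.range n, (1 + q ^ (2 * k + 2))) *
            ∏ k ∈ Finset.range n, (∑ j ∈ Finset.range M, (t * q ^ (2 * k + 1)) ^ j)) *
              ∑ j ∈ Finset.range M, (t * q ^ (2 * n + 1)) ^ j) * (1 + q ^ (2 * n + 2)) := by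
      rw [Finset.prod_range_succ, Finset.prod_range_succ]
      ring
    rw [hsplit]
    have hodd := step_odd (2 * n + 1) M ⟨n, by omega⟩ _
      (fun d' hd' => by rw [ih d' hd', show 2 * n + 1 - 1 = 2 * n from rfl])
    have heven := step_even (2 * n + 2) M ⟨n + 1, by omega⟩ (by omega) _
      (fun d' hd' => by rw [hodd d' hd', show 2 * n + 2 - 1 = 2 * n + 1 from rfl])
    rw [heven d hd, show 2 * (n + 1) = 2 * n + 2 from by omega]

/-! ### Putting everything together -/

lemma geom_aux (x : PS) (n : ℕ) :
    (∑ j ∈ Finset.range n, x ^ j) * (1 - x) = 1 - x ^ n := by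
  have h := geom_sum_mul x n
  linear_combination -h

lemma SO_eq : Ssum * pochInf (t * q) (q ^ 2) = pochInf (-(q ^ 2)) (q ^ 2) := by
  apply MvPowerSeries.ext
  intro d
  set N := d 0 with hN
  set n := N + 1 with hn
  set BP := (∏ k ∈ Finset.range n, (1 + q ^ (2 * k + 2))) *
    ∏ k ∈ Finset.range n, (∑ j ∈ Finset.range n, (t * q ^ (2 * k + 1)) ^ j) with hBP
  have CS : CEq N Ssum BP := by
    intro d' hd'
    have h1 : MvPowerSeries.coeff d' Ssum = MvPowerSeries.coeff d' (fN (d' 0)) := rfl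
    rw [h1, coeff_fN, if_pos rfl, hBP, coeff_bigProd n n d' (by omega),
      cnt_full (2 * n) (d' 0) (d' 1) (by omega)]
  have CO := CEq_pochInf (t * q) coeff_tq_mul N
  have CE := CEq_pochInf (-(q ^ 2)) coeff_nq_mul N
  have key := CEq.mul CS CO d le_rfl
  rw [key]
  have halg : BP * poch (t * q) (q ^ 2) n
      = poch (-(q ^ 2)) (q ^ 2) n * ∏ k ∈ Finset.range n, (1 - (t * q ^ (2 * k + 1)) ^ n) := by
    rw [hBP]
    unfold poch
    rw [Finset.prod_congr rfl (fun k _ =>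
        show (1 - (t * q) * (q ^ 2) ^ k : PS) = 1 - t * q ^ (2 * k + 1) from by ring),
      Finset.prod_congr rfl (fun k _ =>
        show (1 - (-(q ^ 2)) * (q ^ 2) ^ k : PS) = 1 + q ^ (2 * k + 2) from by ring),
      mul_assoc, ← Finset.prod_mul_distrib]
    congr 1
    exact Finset.prod_congr rfl fun k _ => geom_aux _ _
  rw [halg]
  have CT : CEq N (∏ k ∈ Finset.range n, (1 - (t * q ^ (2 * k + 1)) ^ n)) 1 := by
    refine CEq.prod_one fun k _ => ?_
    intro d' hd'
    rw [map_sub]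
    have hx : ((t * q ^ (2 * k + 1)) ^ n : PS) = t ^ n * q ^ ((2 * k + 1) * n) := by
      rw [mul_pow, ← pow_mul]
    rw [hx, coeff_tq_pow, if_neg, sub_zero]
    rintro ⟨h0, -⟩
    have h2 : n ≤ (2 * k + 1) * n := Nat.le_mul_of_pos_left _ (by omega)
    omega
  have hfin := CEq.mul (CEq.refl N (poch (-(q ^ 2)) (q ^ 2) n)) CT d le_rfl
  rw [hfin, mul_one]
  exact (CE d le_rfl).symm

lemma constCoeff_O : MvPowerSeries.constantCoeff (pochInf (t * q) (q ^ 2)) = 1 := by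
  have h := CEq_pochInf (t * q) coeff_tq_mul 0 0 (by simp)
  rw [← MvPowerSeries.coeff_zero_eq_constantCoeff_apply, h]
  unfold poch
  rw [zero_add, Finset.prod_range_one, pow_zero, mul_one, map_sub]
  have h2 : ((t * q : PS)) = t ^ 1 * q ^ 1 := by ring
  rw [h2, coeff_tq_pow, MvPowerSeries.coeff_one, if_pos rfl, if_neg, sub_zero]
  rintro ⟨h0, -⟩
  simp at h0

end DEaux

/-- `(-q²;q²)_∞/(tq;q²)_∞` generates partitions with distinct even parts,
with `t` tracking the number of odd parts. -/
theorem distinct_evens_generating_function :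
    pochInf (-(q ^ 2)) (q ^ 2) * (pochInf (t * q) (q ^ 2))⁻¹
      = ∑' N : ℕ, ∑ p ∈ DE N, t ^ oddCount p * q ^ N := by
  have h1 : (∑' N : ℕ, ∑ p ∈ DE N, t ^ oddCount p * q ^ N) = DEaux.Ssum :=
    DEaux.hasSum_fN.tsum_eq
  rw [h1]
  have h3 : pochInf (t * q) (q ^ 2) * (pochInf (t * q) (q ^ 2))⁻¹ = 1 :=
    MvPowerSeries.mul_inv_cancel _ (by rw [DEaux.constCoeff_O]; exact one_ne_zero)
  calc pochInf (-(q ^ 2)) (q ^ 2) * (pochInf (t * q) (q ^ 2))⁻¹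
      = (DEaux.Ssum * pochInf (t * q) (q ^ 2)) * (pochInf (t * q) (q ^ 2))⁻¹ := by
        rw [DEaux.SO_eq]
    _ = DEaux.Ssum * (pochInf (t * q) (q ^ 2) * (pochInf (t * q) (q ^ 2))⁻¹) := by
        rw [mul_assoc]
    _ = DEaux.Ssum := by rw [h3, mul_one]
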